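/- A nondecreasing function with at most polynomial growth that satisfies f ≤ λ·f′ almost everywhere is identically zero: let a ∈ ℝ, λ > 0, K ≥ 0, m ∈ ℕ, and let f : ℝ → ℝ be nonnegative and nondecreasing with f(R) ≤ K·(1+|R|)^m for all R ≥ a. If for almost every R > a at which f is differentiable one has f(R) ≤ λ·f′(R), then f(R) = 0 for all R ≥ a. -/

import Mathlib

open MeasureTheory Set Filter

/-- For a monotone function, the integral of the derivative over `[x,y]` is at most
`f z - f x` for any `z > y`. -/
lemma monotone_integral_deriv_le {f : ℝ → ℝ} (hf : Monotone f) {x y z : ℝ}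
    (hxy : x ≤ y) (hyz : y < z) :
    ∫ t in x..y, deriv f t ≤ f z - f x := by
  set ν := hf.stieltjesFunction.measure with hν
  set d : ℝ → ℝ := fun t => (ν.rnDeriv volume t).toReal with hd
  have hd_ae : deriv f =ᵐ[volume] d := by
    filter_upwards [hf.ae_hasDerivAt] with t ht
    exact ht.deriv
  have hfin : ν (Ioc x y) ≠ ⊤ := by
    rw [hν, StieltjesFunction.measure_Ioc]
    exact ENNReal.ofReal_ne_top
  have h1 : ∫ t in x..y, deriv f t = ∫ t in Ioc x y, d t := by
    rw [intervalIntegral.integral_congr_ae (g := d), intervalIntegral.integral_of_le hxy]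
    filter_upwards [hd_ae] with t ht _
    exact ht
  have h2 : ∫ t in Ioc x y, d t = (∫⁻ t in Ioc x y, ν.rnDeriv volume t).toReal := by
    apply integral_toReal ((Measure.measurable_rnDeriv _ _).aemeasurable)
    exact ae_restrict_of_ae (Measure.rnDeriv_lt_top ν volume)
  have h3 : (∫⁻ t in Ioc x y, ν.rnDeriv volume t).toReal ≤ (ν (Ioc x y)).toReal :=
    ENNReal.toReal_mono hfin (Measure.setLIntegral_rnDeriv_le _)
  have h4 : (ν (Ioc x y)).toReal ≤ f z - f x := by
    rw [hν, StieltjesFunction.measure_Ioc, ENNReal.toReal_ofReal_eq_iff.2]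
    · have hy' : hf.stieltjesFunction y ≤ f z := by
        rw [hf.stieltjesFunction_eq]; exact hf.rightLim_le hyz
      have hx' : f x ≤ hf.stieltjesFunction x := by
        rw [hf.stieltjesFunction_eq]; exact hf.le_rightLim le_rfl
      linarith
    · exact sub_nonneg.2 (hf.stieltjesFunction.mono hxy)
  rw [h1, h2]
  exact h3.trans h4

/-- The derivative of a monotone function is interval integrable. -/
lemma monotone_intervalIntegrable_deriv {f : ℝ → ℝ} (hf : Monotone f) {x y : ℝ} (hxy : x ≤ y) :
    IntervalIntegrable (deriv f) volume x y := by
  set ν := hf.stieltjesFunction.measure with hν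
  set d : ℝ → ℝ := fun t => (ν.rnDeriv volume t).toReal with hd
  have hd_ae : deriv f =ᵐ[volume] d := by
    filter_upwards [hf.ae_hasDerivAt] with t ht
    exact ht.deriv
  have hfin : ν (Ioc x y) ≠ ⊤ := by
    rw [hν, StieltjesFunction.measure_Ioc]
    exact ENNReal.ofReal_ne_top
  rw [intervalIntegrable_iff_integrableOn_Ioc_of_le hxy]
  have hdint : IntegrableOn d (Ioc x y) volume := by
    apply integrable_toReal_of_lintegral_ne_top
      ((Measure.measurable_rnDeriv _ _).aemeasurable)
    exact (Measure.lintegral_rnDeriv_lt_top_of_measure_ne_top volume hfin).ne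
  exact hdint.congr (ae_restrict_of_ae hd_ae.symm)

/-- A nondecreasing nonnegative function with at most polynomial growth that satisfies
`f ≤ λ·f′` almost everywhere on `(a, ∞)` (at points of differentiability) is
identically zero on `[a, ∞)`. -/
theorem eq_zero_of_le_lambda_mul_deriv
    (a lam K : ℝ) (hlam : 0 < lam) (hK : 0 ≤ K) (m : ℕ) (f : ℝ → ℝ)
    (hf_nonneg : ∀ R, 0 ≤ f R) (hf_mono : Monotone f)
    (hf_growth : ∀ R, a ≤ R → f R ≤ K * (1 + |R|) ^ m)
    (hdiff_ineq : ∀ᵐ R ∂MeasureTheory.volume,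
      a < R → DifferentiableAt ℝ f R → f R ≤ lam * deriv f R) :
    ∀ R, a ≤ R → f R = 0 := by
  by_contra h
  push_neg at h
  obtain ⟨R₁, hR₁a, hfR₁⟩ := h
  set R₀ : ℝ := R₁ + 1 with hR₀def
  have hR₀a : a < R₀ := by linarith
  set c : ℝ := f R₀ with hcdef
  have hc : 0 < c := lt_of_lt_of_le ((hf_nonneg R₁).lt_of_ne (Ne.symm hfR₁)) (hf_mono (by linarith))
  -- Induction: f R ≥ c (R-R₀)^k / (k! lam^k) for R ≥ R₀
  have key : ∀ k : ℕ, ∀ R, R₀ ≤ R → c * (R - R₀) ^ k / (k.factorial * lam ^ k) ≤ f R := by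
    intro k
    induction k with
    | zero =>
      intro R hR
      simpa using hf_mono hR
    | succ k ih =>
      intro R hR
      rcases eq_or_lt_of_le hR with rfl | hlt
      · simp [hf_nonneg]
      · set D : ℝ := (k + 1).factorial * lam ^ (k + 1) with hDdef
        have hDpos : 0 < D := by positivity
        have main : ∀ y ∈ Ioo R₀ R, c * (y - R₀) ^ (k + 1) / D ≤ f R - c := by
          intro y hy
          have hInt : IntervalIntegrable (deriv f) volume R₀ y :=
            monotone_intervalIntegrable_deriv hf_mono hy.1.le
          set low : ℝ → ℝ := fun t => c / (k.factorial * lam ^ (k + 1)) * (t - R₀) ^ k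
            with hlowdef
          have hlowInt : IntervalIntegrable low volume R₀ y := by
            apply Continuous.intervalIntegrable
            continuity
          have hmono_int : ∫ t in R₀..y, low t ≤ ∫ t in R₀..y, deriv f t := by
            rw [intervalIntegral.integral_of_le hy.1.le, intervalIntegral.integral_of_le hy.1.le]
            apply setIntegral_mono_ae_restrict
              (hlowInt.1.mono_set (by simp [Ioc_subset_Ioc_right le_rfl])) hInt.1
            rw [Filter.EventuallyLE, ae_restrict_iff' measurableSet_Ioc]
            filter_upwards [hdiff_ineq, hf_mono.ae_differentiableAt] with t h1 h2 ht
            have hat : a < t := lt_trans hR₀a ht.1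
            have h3 : c * (t - R₀) ^ k / (k.factorial * lam ^ k) ≤ lam * deriv f t :=
              le_trans (ih t ht.1.le) (h1 hat h2)
            have hfac : (0:ℝ) < (k.factorial : ℝ) * lam ^ k := by positivity
            have : low t = c * (t - R₀) ^ k / (k.factorial * lam ^ k) / lam := by
              rw [hlowdef]; field_simp; ring_nf
            rw [this, div_le_iff₀ hlam]
            nlinarith [h3]
          have hcomp : ∫ t in R₀..y, low t = c * (y - R₀) ^ (k + 1) / D := by
            have hpow : ∫ t in R₀..y, (t - R₀) ^ k = (y - R₀) ^ (k + 1) / (k + 1) := by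
              have := intervalIntegral.integral_comp_sub_right (fun t => t ^ k) R₀
                (a := R₀) (b := y)
              rw [this, integral_pow]
              simp
            rw [hlowdef]
            rw [intervalIntegral.integral_const_mul, hpow, hDdef]
            have : ((k + 1).factorial : ℝ) = (k + 1) * k.factorial := by
              rw [Nat.factorial_succ]; push_cast; ring
            rw [this]
            field_simp
          have hub : ∫ t in R₀..y, deriv f t ≤ f R - c :=
            monotone_integral_deriv_le hf_mono hy.1.le hy.2
          calc c * (y - R₀) ^ (k + 1) / D = ∫ t in R₀..y, low t := hcomp.symm
            _ ≤ ∫ t in R₀..y, deriv f t := hmono_int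
            _ ≤ f R - c := hub
        have hcont : Tendsto (fun y => c * (y - R₀) ^ (k + 1) / D) (nhdsWithin R (Iio R))
            (nhds (c * (R - R₀) ^ (k + 1) / D)) := by
          apply Tendsto.mono_left _ nhdsWithin_le_nhds
          exact (Continuous.tendsto (by continuity) R)
        have hev : ∀ᶠ y in nhdsWithin R (Iio R), c * (y - R₀) ^ (k + 1) / D ≤ f R - c := by
          filter_upwards [Ioo_mem_nhdsLT_of_mem ⟨hlt, le_rfl⟩] with y hy
          exact main y hy
        have := le_of_tendsto hcont hev
        linarith
  -- Contradiction with polynomial growth at k = m + 1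
  set D : ℝ := ((m + 1).factorial : ℝ) * lam ^ (m + 1) with hDdef
  have hDpos : 0 < D := by positivity
  set T : ℝ := max (max 1 (1 + |R₀|)) (D * K * 2 ^ m / c + 1) with hTdef
  have hT1 : (1:ℝ) ≤ T := le_trans (le_max_left _ _) (le_max_left _ _)
  have hT2 : 1 + |R₀| ≤ T := le_trans (le_max_right _ _) (le_max_left _ _)
  have hT3 : D * K * 2 ^ m / c + 1 ≤ T := le_max_right _ _
  have hTpos : 0 < T := lt_of_lt_of_le one_pos hT1
  set R : ℝ := R₀ + T with hRdef
  have hRR₀ : R₀ ≤ R := by linarith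
  have hRa : a ≤ R := by linarith
  have hlow : c * T ^ (m + 1) / D ≤ f R := by
    have := key (m + 1) R hRR₀
    simpa [hRdef, hDdef] using this
  have hup : f R ≤ K * (2 * T) ^ m := by
    refine le_trans (hf_growth R hRa) ?_
    apply mul_le_mul_of_nonneg_left _ hK
    apply pow_le_pow_left₀ (by positivity)
    have : |R| ≤ |R₀| + T := by
      rw [hRdef]
      calc |R₀ + T| ≤ |R₀| + |T| := abs_add_le _ _
        _ = |R₀| + T := by rw [abs_of_pos hTpos]
    linarith
  have hfinal : c * T ^ (m + 1) ≤ D * K * 2 ^ m * T ^ m := by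
    have h := hlow.trans hup
    rw [div_le_iff₀ hDpos] at h
    calc c * T ^ (m + 1) ≤ K * (2 * T) ^ m * D := h
      _ = D * K * 2 ^ m * T ^ m := by rw [mul_pow]; ring
  have hTm : 0 < T ^ m := by positivity
  have : c * T ≤ D * K * 2 ^ m := by
    have := hfinal
    rw [pow_succ] at this
    nlinarith
  have : T ≤ D * K * 2 ^ m / c := by rw [le_div_iff₀ hc]; linarith
  linarith
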